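/- Let n_j : ℝ → E (j=1,…,N) be differentiable maps with derivatives ṅ_j such that {n_j(t)} is an orthonormal basis of E for every t, and let Θ_j : ℝ → ℝ be differentiable with Θ_j'(t) = θ_j(t). Then U(t) = Σ_j e^{iΘ_j(t)} |n_j(t)⟩⟨n_j(0)| is differentiable in t and i·U'(t) ∘ U(t)† = i Σ_j ( |ṅ_j(t)⟩⟨n_j(t)| + i θ_j(t) |n_j(t)⟩⟨n_j(t)| ), i.e. the Hamiltonian generating U is the shortcut Hamiltonian H_SA(t). -/

import Mathlib

/-- The rank-one operator `|u⟩⟨v| : z ↦ ⟪v, z⟫ • u`. -/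
noncomputable def ketBra {E : Type*} [NormedAddCommGroup E] [InnerProductSpace ℂ E]
    (u v : E) : E →L[ℂ] E :=
  (innerSL ℂ v).smulRight u

/-- The shortcut (transitionless) Hamiltonian
`H_SA(t) = i Σ_j ( |ṅ_j(t)⟩⟨n_j(t)| + i θ_j(t) |n_j(t)⟩⟨n_j(t)| )`. -/
noncomputable def HSA {E : Type*} [NormedAddCommGroup E] [InnerProductSpace ℂ E]
    {N : ℕ} (n n' : Fin N → ℝ → E) (θ : Fin N → ℝ → ℝ) (t : ℝ) : E →L[ℂ] E :=
  Complex.I • ∑ j : Fin N,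
    (ketBra (n' j t) (n j t) + (Complex.I * (θ j t : ℂ)) • ketBra (n j t) (n j t))

section aux

variable {E : Type*} [NormedAddCommGroup E] [InnerProductSpace ℂ E]

lemma ketBra_apply (u v z : E) : ketBra u v z = (inner ℂ v z : ℂ) • u := rfl

lemma ketBra_comp (u v a b : E) :
    (ketBra u v).comp (ketBra a b) = (inner ℂ v a : ℂ) • ketBra u b := by
  ext z
  simp [ketBra_apply, ContinuousLinearMap.comp_apply, inner_smul_right, smul_smul, mul_comm]

lemma adjoint_ketBra [FiniteDimensional ℂ E] (u v : E) :
    ContinuousLinearMap.adjoint (ketBra u v) = ketBra v u := by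
  refine (ContinuousLinearMap.eq_adjoint_iff (ketBra v u) (ketBra u v) |>.2 fun x y => ?_).symm
  simp [ketBra_apply, inner_smul_left, inner_smul_right, mul_comm]

lemma hasDerivAt_ketBra_left {f : ℝ → E} {f' : E} {t : ℝ} (hf : HasDerivAt f f' t) (v : E) :
    HasDerivAt (fun s => ketBra (f s) v) (ketBra f' v) t := by
  have := (((ContinuousLinearMap.smulRightL ℂ E E (innerSL ℂ v)).restrictScalars
    ℝ).hasFDerivAt (x := f t)).comp_hasDerivAt t hf
  simpa [ketBra, Function.comp_def] using this

lemma comp_finsum {ι : Type*} (s : Finset ι) (h : E →L[ℂ] E) (g : ι → E →L[ℂ] E) :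
    h.comp (∑ i ∈ s, g i) = ∑ i ∈ s, h.comp (g i) := by
  ext z; simp

end aux

/-- `U(t) = Σ_j e^{iΘ_j(t)} |n_j(t)⟩⟨n_j(0)|` is differentiable in `t` and
`i U'(t) ∘ U(t)† = H_SA(t)`, the shortcut Hamiltonian. -/
theorem hamiltonian_of_transitionless_evolution
    {E : Type*} [NormedAddCommGroup E] [InnerProductSpace ℂ E] [FiniteDimensional ℂ E]
    {N : ℕ} (n n' : Fin N → ℝ → E) (Θ θ : Fin N → ℝ → ℝ)
    (hON : ∀ t : ℝ, Orthonormal ℂ (fun j : Fin N => n j t))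
    (hspan : ∀ t : ℝ, Submodule.span ℂ (Set.range (fun j : Fin N => n j t)) = ⊤)
    (hn : ∀ (j : Fin N) (t : ℝ), HasDerivAt (n j) (n' j t) t)
    (hΘ : ∀ (j : Fin N) (t : ℝ), HasDerivAt (Θ j) (θ j t) t)
    (U : ℝ → E →L[ℂ] E)
    (hU : ∀ t : ℝ,
      U t = ∑ j : Fin N, Complex.exp (Complex.I * (Θ j t : ℂ)) • ketBra (n j t) (n j 0)) :
    ∀ t : ℝ, ∃ D : E →L[ℂ] E, HasDerivAt U D t ∧
      Complex.I • (D.comp (ContinuousLinearMap.adjoint (U t))) = HSA n n' θ t := by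
  have hUeq : U = fun t => ∑ j : Fin N,
      Complex.exp (Complex.I * (Θ j t : ℂ)) • ketBra (n j t) (n j 0) := funext hU
  subst hUeq
  intro t
  set c : Fin N → ℂ := fun j => Complex.exp (Complex.I * (Θ j t : ℂ)) with hc
  refine ⟨∑ j : Fin N, (c j • ketBra (n' j t) (n j 0)
      + (c j * (Complex.I * (θ j t : ℂ))) • ketBra (n j t) (n j 0)), ?_, ?_⟩
  · apply HasDerivAt.fun_sum
    intro j _
    have hcexp : HasDerivAt (fun s => Complex.exp (Complex.I * (Θ j s : ℂ)))
        (c j * (Complex.I * (θ j t : ℂ))) t := by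
      have h1 : HasDerivAt (fun s => Complex.I * (Θ j s : ℂ)) (Complex.I * (θ j t : ℂ)) t :=
        ((hΘ j t).ofReal_comp).const_mul Complex.I
      exact h1.cexp
    exact hcexp.smul (hasDerivAt_ketBra_left (hn j t) (n j 0))
  · -- compute the adjoint of U t
    have hadj : ContinuousLinearMap.adjoint
        (∑ j : Fin N, c j • ketBra (n j t) (n j 0))
        = ∑ j : Fin N, (starRingEnd ℂ) (c j) • ketBra (n j 0) (n j t) := by
      rw [map_sum]
      refine Finset.sum_congr rfl fun j _ => ?_
      rw [map_smulₛₗ, adjoint_ketBra]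
    rw [hadj]
    have hinner : ∀ j k : Fin N, (inner ℂ (n j 0) (n k 0) : ℂ) = if j = k then 1 else 0 :=
      orthonormal_iff_ite.mp (hON 0)
    have hcc : ∀ j : Fin N, c j * (starRingEnd ℂ) (c j) = 1 := by
      intro j
      rw [hc]
      simp only [← Complex.exp_conj, map_mul, Complex.conj_I, Complex.conj_ofReal,
        ← Complex.exp_add]
      rw [show Complex.I * (Θ j t : ℂ) + -Complex.I * (Θ j t : ℂ) = 0 by ring,
        Complex.exp_zero]
    rw [ContinuousLinearMap.finset_sum_comp]
    have hterm : ∀ j : Fin N,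
        ((c j • ketBra (n' j t) (n j 0)
          + (c j * (Complex.I * (θ j t : ℂ))) • ketBra (n j t) (n j 0)).comp
          (∑ k : Fin N, (starRingEnd ℂ) (c k) • ketBra (n k 0) (n k t)))
        = ketBra (n' j t) (n j t)
          + (Complex.I * (θ j t : ℂ)) • ketBra (n j t) (n j t) := by
      intro j
      rw [comp_finsum]
      have : ∀ k : Fin N,
          ((c j • ketBra (n' j t) (n j 0)
            + (c j * (Complex.I * (θ j t : ℂ))) • ketBra (n j t) (n j 0)).comp
            ((starRingEnd ℂ) (c k) • ketBra (n k 0) (n k t)))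
          = if j = k then ketBra (n' j t) (n j t)
              + (Complex.I * (θ j t : ℂ)) • ketBra (n j t) (n j t) else 0 := by
        intro k
        rw [ContinuousLinearMap.comp_smul, ContinuousLinearMap.add_comp,
          ContinuousLinearMap.smul_comp, ContinuousLinearMap.smul_comp,
          ketBra_comp, ketBra_comp, hinner j k]
        by_cases h : j = k
        · subst h
          have h1 : (starRingEnd ℂ) (c j) * c j = 1 := by rw [mul_comm]; exact hcc j
          simp only [if_true, one_smul, smul_add, smul_smul, ← mul_assoc, h1, one_mul,
            one_smul]
        · simp [h]
      rw [Finset.sum_congr rfl fun k _ => this k]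
      simp
    rw [Finset.sum_congr rfl fun j _ => hterm j]
    rfl
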